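/- arXiv:2002.06110 — 3 statements merged into one kernel-verified Lean document; each statement's English description precedes it below -/
import Mathlib

section
/- Let A be a differential graded algebra over a field k with generators e of degree 0 and h of degree -1 subject only to the relations d(e) = z(eh - he) and d(h) = e - e^2 - z h^2 (where z is a formal central indeterminate of degree 2, and d is extended by the Leibniz rule). Then d^2 = 0 on A, i.e. these relations are consistent with a dg algebra structure. -/
/-- Let `A` be a graded ring (over a field `k`, e.g. the free
`k⟦z⟧`-algebra on generators `e`, `h`), with a central element `z` of degree `2`,
an element `e` of degree `0` and an element `h` of degree `-1`, and an additive map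
`D` raising degree by `1`, satisfying the graded Leibniz rule and
`D e = z(eh - he)`, `D h = e - e² - z h²`, `D z = 0`.  Then `D² = 0` on the subring
generated by `e`, `h`, `z`: the stated relations are consistent with a dg algebra
structure on the free algebra. -/
theorem dg_structure_on_idempotent_algebra
    (A : Type*) [Ring A]
    (𝒜 : ℤ → AddSubgroup A)
    (one_grade : (1 : A) ∈ 𝒜 0)
    (mul_grade : ∀ (i j : ℤ) (x y : A), x ∈ 𝒜 i → y ∈ 𝒜 j → x * y ∈ 𝒜 (i + j))
    (D : A →+ A)
    (D_grade : ∀ (i : ℤ) (x : A), x ∈ 𝒜 i → D x ∈ 𝒜 (i + 1))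
    (leibniz : ∀ (i : ℤ) (x y : A), x ∈ 𝒜 i →
      D (x * y) = D x * y + (Int.negOnePow i : ℤ) • (x * D y))
    (z e h : A)
    (hz : z ∈ 𝒜 2) (hzc : ∀ a : A, z * a = a * z)
    (he : e ∈ 𝒜 0) (hh : h ∈ 𝒜 (-1))
    (hDe : D e = z * (e * h - h * e))
    (hDh : D h = e - e ^ 2 - z * h ^ 2)
    (hDz : D z = 0) :
    ∀ x ∈ Subring.closure ({e, h, z} : Set A), D (D x) = 0 := by
  have n0 : (Int.negOnePow 0 : ℤ) = 1 := by decide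
  have n1 : (Int.negOnePow (-1) : ℤ) = -1 := by decide
  have n2 : (Int.negOnePow 2 : ℤ) = 1 := by decide
  have zmove : ∀ a b : A, a * (z * b) = z * (a * b) := fun a b => by
    rw [← mul_assoc, ← hzc, mul_assoc]
  have Lz : ∀ a : A, D (z * a) = z * D a := fun a => by
    rw [leibniz 2 z a hz, hDz, n2, one_smul, zero_mul, zero_add]
  have Le : ∀ a : A, D (e * a) = D e * a + e * D a := fun a => by
    rw [leibniz 0 e a he, n0, one_smul]
  have Lh : ∀ a : A, D (h * a) = D h * a - h * D a := fun a => by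
    rw [leibniz (-1) h a hh, n1, neg_smul, one_smul, ← sub_eq_add_neg]
  -- D² kills the generators
  have De2 : D (D e) = 0 := by
    rw [hDe, Lz, map_sub, Le, Lh, hDe, hDh]
    simp only [pow_two, mul_sub, sub_mul, mul_add, add_mul, mul_assoc, zmove]
    noncomm_ring
  have Dh2 : D (D h) = 0 := by
    rw [hDh, pow_two, pow_two, map_sub, map_sub, Le, Lz, Lh, hDe, hDh]
    simp only [pow_two, mul_sub, sub_mul, mul_add, add_mul, mul_assoc, zmove]
    noncomm_ring
  have Dz2 : D (D z) = 0 := by rw [hDz, map_zero]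
  have D1 : D (1 : A) = 0 := by
    have h1 := leibniz 0 1 1 one_grade
    rw [n0, one_smul] at h1
    simp only [mul_one, one_mul] at h1
    exact (left_eq_add.mp h1)
  -- D² satisfies the plain Leibniz rule, so vanishing propagates to products
  have key : ∀ (i : ℤ) (x y : A), x ∈ 𝒜 i → D (D x) = 0 → D (D y) = 0 →
      D (D (x * y)) = 0 := by
    intro i x y hx hx2 hy2
    rw [leibniz i x y hx, map_add, leibniz (i + 1) (D x) y (D_grade i x hx),
      map_zsmul, leibniz i x (D y) hx, hx2, hy2, Int.negOnePow_succ]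
    push_cast
    simp only [zero_mul, zero_add, mul_zero, smul_zero, add_zero, neg_smul]
    exact neg_add_cancel _
  -- the subgroups of homogeneous elements killed by D²
  set G : ℤ → AddSubgroup A := fun i =>
    { carrier := {x | x ∈ 𝒜 i ∧ D (D x) = 0}
      zero_mem' := ⟨(𝒜 i).zero_mem, by simp⟩
      add_mem' := fun ha hb => ⟨(𝒜 i).add_mem ha.1 hb.1, by
        simp [map_add, ha.2, hb.2]⟩
      neg_mem' := fun ha => ⟨(𝒜 i).neg_mem ha.1, by simp [map_neg, ha.2]⟩ }
    with hGdef
  have hGmem : ∀ (i : ℤ) (x : A), x ∈ G i ↔ x ∈ 𝒜 i ∧ D (D x) = 0 := fun i x =>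
    Iff.rfl
  have mulS : ∀ x ∈ ⨆ i, G i, ∀ y ∈ ⨆ i, G i, x * y ∈ ⨆ i, G i := by
    intro x hx y hy
    refine AddSubgroup.iSup_induction G (C := fun x => x * y ∈ ⨆ i, G i) hx
      (fun i x hxi => ?_) (by simp [zero_mul, AddSubgroup.zero_mem]) ?_
    · refine AddSubgroup.iSup_induction G (C := fun y => x * y ∈ ⨆ i, G i) hy
        (fun j y hyj => ?_) (by simp [mul_zero, AddSubgroup.zero_mem]) ?_
      · exact AddSubgroup.mem_iSup_of_mem (i + j)
          ⟨mul_grade i j x y hxi.1 hyj.1, key i x y hxi.1 hxi.2 hyj.2⟩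
      · intro a b ha hb
        rw [mul_add]
        exact AddSubgroup.add_mem _ ha hb
    · intro a b ha hb
      rw [add_mul]
      exact AddSubgroup.add_mem _ ha hb
  have closS : ∀ x ∈ Subring.closure ({e, h, z} : Set A), x ∈ ⨆ i, G i := by
    intro x hx
    induction hx using Subring.closure_induction with
    | mem x hx =>
      rcases hx with rfl | rfl | rfl
      · exact AddSubgroup.mem_iSup_of_mem 0 ⟨he, De2⟩
      · exact AddSubgroup.mem_iSup_of_mem (-1) ⟨hh, Dh2⟩
      · exact AddSubgroup.mem_iSup_of_mem 2 ⟨hz, Dz2⟩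
    | zero => exact AddSubgroup.zero_mem _
    | one =>
      exact AddSubgroup.mem_iSup_of_mem 0 ⟨one_grade, by rw [D1, map_zero]⟩
    | add a b _ _ ha hb => exact AddSubgroup.add_mem _ ha hb
    | neg a _ ha => exact AddSubgroup.neg_mem _ ha
    | mul a b ha' hb' ha hb => exact mulS a ha b hb
  intro x hx
  refine AddSubgroup.iSup_induction G (C := fun x => D (D x) = 0) (closS x hx)
    (fun i x hxi => hxi.2) (by simp) ?_
  intro a b ha hb
  rw [map_add, map_add, ha, hb, add_zero]
end

section
/- Let R = C[x_1,...,x_n] and R^{S_n} ⊆ R the subring of symmetric polynomials. Then R is a free R^{S_n}-module with basis the monomials x_1^{a_1} x_2^{a_2} ··· x_{n-1}^{a_{n-1}} with 0 ≤ a_i ≤ n - i; in particular R has rank n! over R^{S_n}. -/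
/- Auxiliary development for the Artin basis theorem: we prove by induction on `n`
(over any domain) that the monomials `x^a` with `a i ≤ n - 1 - i` are linearly
independent over, and span `R[x₁,…,xₙ]` as a module over, the symmetric polynomials. -/

open MvPolynomial Finset

set_option linter.unusedSectionVars false

namespace ArtinAux

abbrev Idx (n : ℕ) := {a : Fin n → ℕ // ∀ i : Fin n, a i ≤ n - 1 - (i : ℕ)}

instance idxFintype (n : ℕ) : Fintype (Idx n) := by
  apply Fintype.subtype (Fintype.piFinset fun i : Fin n => Finset.range (n - (i : ℕ)))
  intro a
  simp only [Fintype.mem_piFinset, Finset.mem_range]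
  refine forall_congr' fun i => ?_
  have hi : (i : ℕ) < n := i.isLt
  omega

theorem idx_card (n : ℕ) : Fintype.card (Idx n) = n.factorial := by
  rw [Fintype.card_of_subtype (Fintype.piFinset fun i : Fin n => Finset.range (n - (i : ℕ)))]
  · rw [Fintype.card_piFinset]
    simp only [Finset.card_range]
    induction n with
    | zero => simp
    | succ m ih =>
      rw [Fin.prod_univ_succ]
      simp only [Fin.val_zero, Nat.sub_zero, Fin.val_succ]
      rw [Nat.factorial_succ, ← ih]
      congr 1
      · exact Finset.prod_congr rfl fun i _ => by omega
  · intro a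
    simp only [Fintype.mem_piFinset, Finset.mem_range]
    refine forall_congr' fun i => ?_
    have hi : (i : ℕ) < n := i.isLt
    omega

noncomputable def mono (R : Type) [CommRing R] (n : ℕ) (a : Fin n → ℕ) :
    MvPolynomial (Fin n) R := ∏ i, X i ^ a i


theorem esymm_fin_succ (R : Type) [CommRing R] (n k : ℕ) (hk : k < n) :
    esymm (Fin (n+1)) R (k+1)
      = rename Fin.succ (esymm (Fin n) R (k+1))
        + X 0 * rename Fin.succ (esymm (Fin n) R k) := by
  classical
  have hprod : (∏ i : Fin (n+1), (Polynomial.X + Polynomial.C (X i : MvPolynomial (Fin (n+1)) R)))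
      = (Polynomial.X + Polynomial.C (X (0 : Fin (n+1))))
        * Polynomial.map (rename Fin.succ).toRingHom
            (∏ i : Fin n, (Polynomial.X + Polynomial.C (X i : MvPolynomial (Fin n) R))) := by
    rw [Fin.prod_univ_succ, Polynomial.map_prod]
    congr 1
    refine Finset.prod_congr rfl fun i _ => ?_
    simp [Polynomial.map_add, Polynomial.map_X, Polynomial.map_C]
  have hc := congrArg (fun q => Polynomial.coeff q (n - k)) hprod
  rw [MvPolynomial.prod_X_add_C_coeff R (Fin (n+1)) (n - k)
    (by rw [Fintype.card_fin]; omega)] at hc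
  rw [Fintype.card_fin] at hc
  have hnk : n + 1 - (n - k) = k + 1 := by omega
  rw [hnk] at hc
  rw [add_mul, Polynomial.coeff_add] at hc
  obtain ⟨m, hm⟩ : ∃ m, n - k = m + 1 := ⟨n - k - 1, by omega⟩
  rw [hm, Polynomial.coeff_X_mul, Polynomial.coeff_C_mul, Polynomial.coeff_map,
    Polynomial.coeff_map] at hc
  rw [MvPolynomial.prod_X_add_C_coeff R (Fin n) m (by rw [Fintype.card_fin]; omega),
    MvPolynomial.prod_X_add_C_coeff R (Fin n) (m+1) (by rw [Fintype.card_fin]; omega)] at hc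
  rw [Fintype.card_fin] at hc
  have h1 : n - m = k + 1 := by omega
  have h2 : n - (m + 1) = k := by omega
  rw [h1, h2] at hc
  rw [hc]
  simp only [AlgHom.toRingHom_eq_coe, RingHom.coe_coe, add_comm]


theorem stepInd (R : Type) [CommRing R] [IsDomain R] (n : ℕ)
    (s : Fin (n + 1) → MvPolynomial (Fin (n + 1)) R)
    (hs : ∀ i, (s i).IsSymmetric)
    (h : ∑ i : Fin (n + 1), s i * X 0 ^ (i : ℕ) = 0) : ∀ i, s i = 0 := by
  classical
  set V : Matrix (Fin (n + 1)) (Fin (n + 1)) (MvPolynomial (Fin (n + 1)) R) :=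
    Matrix.vandermonde (fun j : Fin (n + 1) => X j) with hV
  have hrow : ∀ j : Fin (n + 1), ∑ i : Fin (n + 1), s i * X j ^ (i : ℕ) = 0 := by
    intro j
    have h2 := congrArg (rename (Equiv.swap (0 : Fin (n+1)) j)) h
    rw [map_zero, map_sum] at h2
    rw [← h2]
    refine (Finset.sum_congr rfl fun i _ => ?_).symm
    rw [map_mul, map_pow, rename_X, hs i (Equiv.swap 0 j), Equiv.swap_apply_left]
  have hmv : V.mulVec s = 0 := by
    funext j
    simp only [Matrix.mulVec, dotProduct, hV, Matrix.vandermonde, Matrix.of_apply,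
      Pi.zero_apply]
    rw [← hrow j]
    exact Finset.sum_congr rfl fun i _ => mul_comm _ _
  have hdet : V.det ≠ 0 := by
    rw [hV, Matrix.det_vandermonde]
    refine Finset.prod_ne_zero_iff.2 fun i _ => Finset.prod_ne_zero_iff.2 fun j hj => ?_
    rw [Finset.mem_Ioi] at hj
    exact sub_ne_zero.2 fun hXe => (hj.ne' (X_injective hXe))
  have hz : V.det • s = 0 := by
    have h2 := congrArg (fun w => (V.adjugate).mulVec w) hmv
    simpa [Matrix.mulVec_mulVec, Matrix.adjugate_mul, Matrix.smul_mulVec,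
      Matrix.one_mulVec] using h2
  intro i
  have h3 := congrFun hz i
  simp only [Pi.smul_apply, Pi.zero_apply, smul_eq_mul] at h3
  rcases mul_eq_zero.mp h3 with h' | h'
  · exact absurd h' hdet
  · exact h'

section Span

variable (R : Type) [CommRing R] [IsDomain R] (n : ℕ)

local notation "M" => MvPolynomial (Fin (n+1)) R
local notation "S" => symmetricSubalgebra (Fin (n+1)) R
local notation "W" => Submodule.span (symmetricSubalgebra (Fin (n+1)) R)
  (Set.range fun i : Fin (n+1) => (X 0 : MvPolynomial (Fin (n+1)) R) ^ (i : ℕ))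

theorem symm_mul_mem {q w : M} (hq : q.IsSymmetric) (hw : w ∈ W) : q * w ∈ W := by
  have : (⟨q, hq⟩ : S) • w ∈ W := Submodule.smul_mem _ _ hw
  exact this

theorem veq : (0 : M) = ∑ j ∈ Finset.range (n+2),
    esymm (Fin (n+1)) R j * (-(X 0 : M)) ^ (n + 1 - j) := by
  have h := congrArg (Polynomial.eval (-(X 0 : M)))
    (MvPolynomial.prod_C_add_X_eq_sum_esymm R (Fin (n+1)))
  rw [Polynomial.eval_prod] at h
  rw [Finset.prod_eq_zero (Finset.mem_univ (0 : Fin (n+1)))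
    (by simp : Polynomial.eval (-(X 0 : M)) (Polynomial.X + Polynomial.C (X 0)) = 0)] at h
  rw [Polynomial.eval_finset_sum] at h
  simpa [Fintype.card_fin, Polynomial.eval_mul, Polynomial.eval_pow] using h

theorem pow0_mem : ∀ k : ℕ, ((X 0 : M) ^ k) ∈ W := by
  intro k
  induction k using Nat.strong_induction_on with
  | _ k ih =>
  by_cases hk : k ≤ n
  · exact Submodule.subset_span ⟨(⟨k, by omega⟩ : Fin (n+1)), rfl⟩
  · push_neg at hk
    have hrel := congrArg (fun q => q * (X 0 : M) ^ (k - (n+1))) (veq R n)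
    simp only [zero_mul, Finset.sum_mul] at hrel
    rw [Finset.sum_range_succ'] at hrel
    -- last (bottom) term is j = 0
    rw [esymm_zero, one_mul] at hrel
    set c : M := (-1 : M) ^ (n+1) with hc
    have hterm0 : (-(X 0 : M)) ^ (n + 1 - 0) * (X 0 : M) ^ (k - (n+1)) = c * (X 0 : M) ^ k := by
      rw [Nat.sub_zero, neg_pow, mul_assoc, ← pow_add]
      congr 2
      omega
    rw [hterm0] at hrel
    have hck : c * (X 0 : M) ^ k
        = -∑ j ∈ range (n + 1),
            esymm (Fin (n + 1)) R (j + 1) * (-X 0) ^ (n + 1 - (j + 1)) * X 0 ^ (k - (n + 1)) :=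
      eq_neg_of_add_eq_zero_right hrel.symm
    have hcc : c * c = 1 := by
      rw [hc, ← pow_add]
      exact Even.neg_one_pow ⟨n+1, by ring⟩
    have hxk : (X 0 : M) ^ k = c * (c * (X 0 : M) ^ k) := by
      rw [← mul_assoc, hcc, one_mul]
    rw [hxk, hck]
    have hcC : c = MvPolynomial.C ((-1 : R) ^ (n+1)) := by
      rw [hc, map_pow, map_neg, map_one]
    rw [hcC]
    refine symm_mul_mem R n (IsSymmetric.C _) (Submodule.neg_mem _ (Submodule.sum_mem _ ?_))
    intro j hj
    rw [Finset.mem_range] at hj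
    have hexp : (-(X 0 : M)) ^ (n + 1 - (j + 1)) * (X 0 : M) ^ (k - (n + 1))
        = MvPolynomial.C ((-1 : R) ^ (n - j)) * (X 0 : M) ^ (n - j + (k - (n + 1))) := by
      have : n + 1 - (j + 1) = n - j := by omega
      rw [this, neg_pow, mul_assoc, ← pow_add, map_pow, map_neg, map_one]
    rw [mul_assoc, hexp]
    exact symm_mul_mem R n (esymm_isSymmetric _ _ _)
      (symm_mul_mem R n (IsSymmetric.C _) (ih _ (by omega)))

end Span

section MoreSpan
variable (R : Type) [CommRing R] [IsDomain R] (n : ℕ)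

local notation "M" => MvPolynomial (Fin (n+1)) R
local notation "S" => symmetricSubalgebra (Fin (n+1)) R
local notation "W" => Submodule.span (symmetricSubalgebra (Fin (n+1)) R)
  (Set.range fun i : Fin (n+1) => (X 0 : MvPolynomial (Fin (n+1)) R) ^ (i : ℕ))

theorem mul_pow0_mem {a : M} (ha : a ∈ W) (k : ℕ) : a * (X 0 : M) ^ k ∈ W := by
  induction ha using Submodule.span_induction with
  | mem x hx =>
    obtain ⟨i, rfl⟩ := hx
    rw [← pow_add]
    exact pow0_mem R n _
  | zero => rw [zero_mul]; exact Submodule.zero_mem _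
  | add x y _ _ hx hy => rw [add_mul]; exact Submodule.add_mem _ hx hy
  | smul s x _ hx => rw [smul_mul_assoc]; exact Submodule.smul_mem _ _ hx

theorem mulW_mem {a b : M} (ha : a ∈ W) (hb : b ∈ W) : a * b ∈ W := by
  induction hb using Submodule.span_induction with
  | mem x hx =>
    obtain ⟨i, rfl⟩ := hx
    exact mul_pow0_mem R n ha _
  | zero => rw [mul_zero]; exact Submodule.zero_mem _
  | add x y _ _ hx hy => rw [mul_add]; exact Submodule.add_mem _ hx hy
  | smul s x _ hx => rw [mul_smul_comm]; exact Submodule.smul_mem _ _ hx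

theorem tail_esymm_mem : ∀ j : ℕ, j ≤ n →
    (rename Fin.succ (esymm (Fin n) R j) : M) ∈ W := by
  intro j
  induction j with
  | zero =>
    intro _
    rw [esymm_zero, map_one]
    simpa using pow0_mem R n 0
  | succ k ihk =>
    intro hk
    have hid := esymm_fin_succ R n k (by omega)
    have : (rename Fin.succ (esymm (Fin n) R (k+1)) : M)
        = esymm (Fin (n+1)) R (k+1) - X 0 * rename Fin.succ (esymm (Fin n) R k) := by
      rw [hid]; ring
    rw [this]
    refine Submodule.sub_mem _ ?_ ?_
    · have : esymm (Fin (n+1)) R (k+1) = esymm (Fin (n+1)) R (k+1) * (X 0 : M) ^ ((0 : Fin (n+1)):ℕ) := by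
        simp
      rw [this]
      exact symm_mul_mem R n (esymm_isSymmetric _ _ _) (pow0_mem R n _)
    · have h1 := mul_pow0_mem R n (ihk (by omega)) 1
      rwa [pow_one, mul_comm] at h1

end MoreSpan

section Step
variable (R : Type) [CommRing R] [IsDomain R] (n : ℕ)
  (ψ : MvPolynomial (Fin (n+1)) R ≃ₐ[R] MvPolynomial (Fin n) (Polynomial R))
  (hψ0 : ψ (X 0) = C Polynomial.X) (hψs : ∀ i : Fin n, ψ (X i.succ) = X i)

local notation "M" => MvPolynomial (Fin (n+1)) R
local notation "N" => MvPolynomial (Fin n) (Polynomial R)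
local notation "S" => symmetricSubalgebra (Fin (n+1)) R
local notation "W" => Submodule.span (symmetricSubalgebra (Fin (n+1)) R)
  (Set.range fun i : Fin (n+1) => (X 0 : MvPolynomial (Fin (n+1)) R) ^ (i : ℕ))

include hψ0 in
theorem psi_symm_C (f : Polynomial R) : ψ.symm (C f) = Polynomial.aeval (X 0 : M) f := by
  have h : ψ.toAlgHom.comp (Polynomial.aeval (X 0 : M))
      = (IsScalarTower.toAlgHom R (Polynomial R) N) := by
    apply Polynomial.algHom_ext
    simp [hψ0, MvPolynomial.algebraMap_eq]
  have := congrArg (fun g => g f) (congrArg DFunLike.coe h)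
  simp only [AlgHom.coe_comp, Function.comp_apply, AlgEquiv.toAlgHom_apply, AlgHom.coe_coe,
    IsScalarTower.coe_toAlgHom'] at this
  rw [show (C f : N) = (algebraMap (Polynomial R) N) f from rfl, ← this, AlgEquiv.symm_apply_apply]

include hψs in
theorem psi_tail (q : MvPolynomial (Fin n) R) :
    ψ (rename Fin.succ q) = MvPolynomial.map (Polynomial.C : R →+* Polynomial R) q := by
  have h : ψ.toAlgHom.comp (rename (Fin.succ : Fin n → Fin (n+1)))
      = mapAlgHom (Algebra.ofId R (Polynomial R)) := by
    apply MvPolynomial.algHom_ext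
    intro i
    simp [hψs i]
  have := congrArg (fun g => g q) (congrArg DFunLike.coe h)
  simpa using this

include hψs in
theorem psi_symm_esymm (j : ℕ) :
    ψ.symm (esymm (Fin n) (Polynomial R) j) = rename Fin.succ (esymm (Fin n) R j) := by
  apply ψ.injective
  rw [AlgEquiv.apply_symm_apply, psi_tail R n ψ hψs, map_esymm]

include hψ0 hψs in
theorem stepSpan (p : M) (hp : (ψ p).IsSymmetric) :
    ∃ s : Fin (n + 1) → M,
      (∀ i, (s i).IsSymmetric) ∧ p = ∑ i : Fin (n + 1), s i * X 0 ^ (i : ℕ) := by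
  classical
  obtain ⟨F, hF⟩ := esymmAlgHom_surjective (R := Polynomial R) (σ := Fin n)
    (le_of_eq (Fintype.card_fin n)) ⟨ψ p, hp⟩
  have hFval : ψ p = aeval (fun i : Fin n => esymm (Fin n) (Polynomial R) ((i : ℕ) + 1)) F := by
    have := congrArg Subtype.val hF
    rw [esymmAlgHom_apply] at this
    exact this.symm
  have hpW : p ∈ W := by
    have hp' : p = ψ.symm (aeval (fun i : Fin n => esymm (Fin n) (Polynomial R) ((i : ℕ) + 1)) F) := by
      rw [← hFval, AlgEquiv.symm_apply_apply]
    rw [hp']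
    clear hp' hFval hF hp
    induction F using MvPolynomial.induction_on with
    | C f =>
      rw [aeval_C, show (algebraMap (Polynomial R) N) f = C f from rfl, psi_symm_C R n ψ hψ0]
      rw [Polynomial.aeval_eq_sum_range]
      refine Submodule.sum_mem _ fun k _ => ?_
      rw [MvPolynomial.smul_eq_C_mul]
      exact symm_mul_mem R n (IsSymmetric.C _) (pow0_mem R n k)
    | add F G hFW hGW =>
      rw [map_add, map_add]
      exact Submodule.add_mem _ hFW hGW
    | mul_X F i hFW =>
      rw [map_mul, aeval_X, map_mul, psi_symm_esymm R n ψ hψs]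
      exact mulW_mem R n hFW (tail_esymm_mem R n _ i.isLt)
  rw [Submodule.mem_span_range_iff_exists_fun] at hpW
  obtain ⟨c, hc⟩ := hpW
  refine ⟨fun i => (c i : M), fun i => (c i).2, ?_⟩
  rw [← hc]
  exact (Finset.sum_congr rfl fun i _ => rfl).symm

end Step


end ArtinAux

namespace ArtinAux

noncomputable def psi (R : Type) [CommRing R] (n : ℕ) :
    MvPolynomial (Fin (n+1)) R ≃ₐ[R] MvPolynomial (Fin n) (Polynomial R) :=
  (renameEquiv R (_root_.finSuccEquiv n)).trans (optionEquivRight R (Fin n))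

theorem psi_X0 (R : Type) [CommRing R] (n : ℕ) :
    psi R n (X 0) = C Polynomial.X := by
  simp [psi, renameEquiv_apply, optionEquivRight_X_none]

theorem psi_Xsucc (R : Type) [CommRing R] (n : ℕ) (i : Fin n) :
    psi R n (X i.succ) = X i := by
  simp [psi, renameEquiv_apply, optionEquivRight_X_some]

/-- extend a permutation of `Fin n` to `Fin (n+1)` fixing `0`. -/
def permExt (n : ℕ) (e : Equiv.Perm (Fin n)) : Equiv.Perm (Fin (n+1)) :=
  (_root_.finSuccEquiv n).trans ((Equiv.optionCongr e).trans (_root_.finSuccEquiv n).symm)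

theorem permExt_zero (n : ℕ) (e : Equiv.Perm (Fin n)) : permExt n e 0 = 0 := by
  simp [permExt]

theorem permExt_succ (n : ℕ) (e : Equiv.Perm (Fin n)) (i : Fin n) :
    permExt n e i.succ = (e i).succ := by
  simp [permExt]

theorem psi_symmetric (R : Type) [CommRing R] (n : ℕ)
    {p : MvPolynomial (Fin (n+1)) R} (hp : p.IsSymmetric) : (psi R n p).IsSymmetric := by
  intro e
  have hcomm : ((rename (⇑e) : MvPolynomial (Fin n) (Polynomial R) →ₐ[Polynomial R]
        MvPolynomial (Fin n) (Polynomial R)).restrictScalars R).comp (psi R n).toAlgHom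
      = (psi R n).toAlgHom.comp (rename (⇑(permExt n e))) := by
    apply MvPolynomial.algHom_ext
    intro i
    induction i using Fin.cases with
    | zero =>
      simp only [AlgHom.coe_comp, Function.comp_apply, rename_X, AlgHom.coe_coe,
        AlgEquiv.toAlgHom_apply, AlgHom.coe_restrictScalars']
      rw [permExt_zero, psi_X0, rename_C]
    | succ j =>
      simp only [AlgHom.coe_comp, Function.comp_apply, rename_X, AlgHom.coe_coe,
        AlgEquiv.toAlgHom_apply, AlgHom.coe_restrictScalars']
      rw [permExt_succ, psi_Xsucc, psi_Xsucc, rename_X]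
  have := congrArg (fun g => g p) (congrArg DFunLike.coe hcomm)
  simp only [AlgHom.coe_comp, Function.comp_apply, AlgEquiv.toAlgHom_apply,
    AlgHom.coe_coe, AlgHom.coe_restrictScalars'] at this
  rw [this, hp (permExt n e)]

noncomputable section Idx2

def idxCons {n : ℕ} (i : Fin (n+1)) (b : Idx n) : Idx (n+1) :=
  ⟨Fin.cons (i : ℕ) b.1, by
    intro j
    induction j using Fin.cases with
    | zero => simpa using Nat.le_of_lt_succ i.isLt
    | succ k =>
      simp only [Fin.cons_succ, Fin.val_succ]
      have := b.2 k
      omega⟩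

def idxHead {n : ℕ} (a : Idx (n+1)) : Fin (n+1) :=
  ⟨a.1 0, by have := a.2 0; simp at this; omega⟩

def idxTail {n : ℕ} (a : Idx (n+1)) : Idx n :=
  ⟨fun j => a.1 j.succ, by
    intro j
    have := a.2 j.succ
    simp only [Fin.val_succ] at this
    dsimp only
    omega⟩

theorem idxHead_cons {n : ℕ} (i : Fin (n+1)) (b : Idx n) : idxHead (idxCons i b) = i := by
  apply Fin.ext
  simp [idxHead, idxCons]

theorem idxTail_cons {n : ℕ} (i : Fin (n+1)) (b : Idx n) : idxTail (idxCons i b) = b := by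
  apply Subtype.ext
  funext j
  simp [idxTail, idxCons]

theorem idx_eta {n : ℕ} (a : Idx (n+1)) : idxCons (idxHead a) (idxTail a) = a := by
  apply Subtype.ext
  funext j
  induction j using Fin.cases with
  | zero => simp [idxCons, idxHead]
  | succ k => simp [idxCons, idxTail]

def idxEquiv (n : ℕ) : Idx (n+1) ≃ Fin (n+1) × Idx n where
  toFun a := (idxHead a, idxTail a)
  invFun x := idxCons x.1 x.2
  left_inv a := idx_eta a
  right_inv x := by
    obtain ⟨i, b⟩ := x
    simp [idxHead_cons, idxTail_cons]

theorem idx_sum_reindex {n : ℕ} {β : Type*} [AddCommMonoid β] (f : Idx (n+1) → β) :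
    ∑ a : Idx (n+1), f a = ∑ i : Fin (n+1), ∑ b : Idx n, f (idxCons i b) := by
  rw [← Equiv.sum_comp (idxEquiv n).symm f, Fintype.sum_prod_type]
  rfl

end Idx2

theorem mono_cons (R : Type) [CommRing R] (n : ℕ) (i : ℕ) (a : Fin n → ℕ) :
    mono R (n+1) (Fin.cons i a) = X 0 ^ i * rename Fin.succ (mono R n a) := by
  rw [mono, Fin.prod_univ_succ, Fin.cons_zero]
  congr 1
  rw [mono, map_prod]
  exact Finset.prod_congr rfl fun j _ => by rw [Fin.cons_succ, map_pow, rename_X]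

theorem map_C_mono (R : Type) [CommRing R] (n : ℕ) (a : Fin n → ℕ) :
    MvPolynomial.map (Polynomial.C : R →+* Polynomial R) (mono R n a)
      = mono (Polynomial R) n a := by
  rw [mono, mono, map_prod]
  exact Finset.prod_congr rfl fun j _ => by rw [map_pow, map_X]

end ArtinAux
namespace ArtinAux

instance idxZeroUnique : Unique (Idx 0) :=
  ⟨⟨⟨fun i => i.elim0, fun i => i.elim0⟩⟩, fun a => Subtype.ext (funext fun i => i.elim0)⟩

theorem isSymmetric_fin_zero (R : Type) [CommRing R] (p : MvPolynomial (Fin 0) R) :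
    p.IsSymmetric := by
  intro e
  rw [Subsingleton.elim e (Equiv.refl (Fin 0))]
  simp [rename_id]

theorem psi_symm_CX (R : Type) [CommRing R] (n : ℕ) :
    (psi R n).symm (C Polynomial.X) = X 0 := by
  rw [← psi_X0 R n, AlgEquiv.symm_apply_apply]

theorem main (n : ℕ) : ∀ (R : Type) [CommRing R] [IsDomain R],
    (∀ c : Idx n → MvPolynomial (Fin n) R, (∀ a, (c a).IsSymmetric) →
      ∑ a : Idx n, c a * mono R n a.1 = 0 → ∀ a, c a = 0) ∧
    (∀ p : MvPolynomial (Fin n) R, ∃ c : Idx n → MvPolynomial (Fin n) R,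
      (∀ a, (c a).IsSymmetric) ∧ ∑ a : Idx n, c a * mono R n a.1 = p) := by
  induction n with
  | zero =>
    intro R _ _
    constructor
    · intro c hc h a
      rw [Fintype.sum_unique] at h
      have : mono R 0 (default : Idx 0).1 = 1 := by
        rw [mono]
        exact Finset.prod_of_isEmpty _
      rw [this, mul_one] at h
      rw [Unique.eq_default a]
      exact h
    · intro p
      refine ⟨fun _ => p, fun _ => isSymmetric_fin_zero R p, ?_⟩
      rw [Fintype.sum_unique]
      have : mono R 0 (default : Idx 0).1 = 1 := by
        rw [mono]
        exact Finset.prod_of_isEmpty _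
      rw [this, mul_one]
  | succ n ih =>
    intro R _ _
    have hterm : ∀ (c : Idx (n+1) → MvPolynomial (Fin (n+1)) R) (i : Fin (n+1)) (b : Idx n),
        psi R n (c (idxCons i b) * mono R (n+1) (idxCons i b).1)
          = psi R n (c (idxCons i b))
            * ((C Polynomial.X : MvPolynomial (Fin n) (Polynomial R)) ^ (i : ℕ)
                * mono (Polynomial R) n b.1) := by
      intro c i b
      rw [map_mul]
      congr 1
      show psi R n (mono R (n+1) (Fin.cons (i : ℕ) b.1)) = _
      rw [mono_cons, map_mul, map_pow, psi_X0,
        psi_tail R n (psi R n) (psi_Xsucc R n), map_C_mono]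
    constructor
    · -- linear independence
      intro c hc h
      set d : Idx n → MvPolynomial (Fin n) (Polynomial R) := fun b =>
        ∑ i : Fin (n+1), psi R n (c (idxCons i b))
          * (C Polynomial.X : MvPolynomial (Fin n) (Polynomial R)) ^ (i : ℕ) with hd
      have hdsym : ∀ b, (d b).IsSymmetric := by
        intro b
        refine (mem_symmetricSubalgebra _).1 (Subalgebra.sum_mem _ fun i _ =>
          Subalgebra.mul_mem _ ((mem_symmetricSubalgebra _).2 (psi_symmetric R n (hc _)))
            (Subalgebra.pow_mem _ ((mem_symmetricSubalgebra _).2 (IsSymmetric.C _)) _))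
      have h2 := congrArg (psi R n) h
      rw [map_zero, map_sum] at h2
      rw [idx_sum_reindex (fun a => psi R n (c a * mono R (n+1) a.1))] at h2
      have h3 : ∑ i : Fin (n+1), ∑ b : Idx n, psi R n (c (idxCons i b))
          * ((C Polynomial.X : MvPolynomial (Fin n) (Polynomial R)) ^ (i : ℕ)
              * mono (Polynomial R) n b.1) = 0 := by
        refine Eq.trans ?_ h2
        exact Finset.sum_congr rfl fun i _ => Finset.sum_congr rfl fun b _ =>
          (hterm c i b).symm
      have hsum : ∑ b : Idx n, d b * mono (Polynomial R) n b.1 = 0 := by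
        calc ∑ b : Idx n, d b * mono (Polynomial R) n b.1
            = ∑ b : Idx n, ∑ i : Fin (n+1), psi R n (c (idxCons i b))
              * ((C Polynomial.X : MvPolynomial (Fin n) (Polynomial R)) ^ (i : ℕ)
                  * mono (Polynomial R) n b.1) := by
              refine Finset.sum_congr rfl fun b _ => ?_
              rw [hd, Finset.sum_mul]
              exact Finset.sum_congr rfl fun i _ => by rw [mul_assoc]
          _ = ∑ i : Fin (n+1), ∑ b : Idx n, psi R n (c (idxCons i b))
              * ((C Polynomial.X : MvPolynomial (Fin n) (Polynomial R)) ^ (i : ℕ)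
                  * mono (Polynomial R) n b.1) := Finset.sum_comm
          _ = 0 := h3
      have hdz := (ih (Polynomial R)).1 d hdsym hsum
      intro a
      have hb := hdz (idxTail a)
      have h4 : ∑ i : Fin (n+1), c (idxCons i (idxTail a)) * X 0 ^ (i : ℕ) = 0 := by
        have h5 := congrArg (psi R n).symm hb
        rw [map_zero, hd, map_sum] at h5
        rw [← h5]
        refine (Finset.sum_congr rfl fun i _ => ?_).symm
        rw [map_mul, AlgEquiv.symm_apply_apply, map_pow, psi_symm_CX]
      have h6 := stepInd R n (fun i => c (idxCons i (idxTail a))) (fun i => hc _) h4 (idxHead a)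
      rwa [idx_eta a] at h6
    · -- spanning
      intro p
      obtain ⟨d, hdsym, hdsum⟩ := (ih (Polynomial R)).2 (psi R n p)
      choose s hssym hsrep using fun b : Idx n =>
        stepSpan R n (psi R n) (psi_X0 R n) (psi_Xsucc R n) ((psi R n).symm (d b))
          (by rw [AlgEquiv.apply_symm_apply]; exact hdsym b)
      refine ⟨fun a => s (idxTail a) (idxHead a), fun a => hssym _ _, ?_⟩
      apply (psi R n).injective
      rw [map_sum, idx_sum_reindex
        (fun a => psi R n (s (idxTail a) (idxHead a) * mono R (n+1) a.1))]
      calc ∑ i : Fin (n+1), ∑ b : Idx n,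
            psi R n (s (idxTail (idxCons i b)) (idxHead (idxCons i b))
              * mono R (n+1) (idxCons i b).1)
          = ∑ i : Fin (n+1), ∑ b : Idx n, psi R n (s b i)
              * ((C Polynomial.X : MvPolynomial (Fin n) (Polynomial R)) ^ (i : ℕ)
                  * mono (Polynomial R) n b.1) := by
            refine Finset.sum_congr rfl fun i _ => Finset.sum_congr rfl fun b _ => ?_
            rw [idxTail_cons, idxHead_cons]
            exact hterm (fun _ => s b i) i b
        _ = ∑ b : Idx n, ∑ i : Fin (n+1), psi R n (s b i)
              * ((C Polynomial.X : MvPolynomial (Fin n) (Polynomial R)) ^ (i : ℕ)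
                  * mono (Polynomial R) n b.1) := Finset.sum_comm
        _ = ∑ b : Idx n, d b * mono (Polynomial R) n b.1 := by
            refine Finset.sum_congr rfl fun b _ => ?_
            have : ∑ i : Fin (n+1), psi R n (s b i)
                * (C Polynomial.X : MvPolynomial (Fin n) (Polynomial R)) ^ (i : ℕ) = d b := by
              have h7 := congrArg (psi R n) (hsrep b)
              rw [AlgEquiv.apply_symm_apply, map_sum] at h7
              rw [h7]
              refine Finset.sum_congr rfl fun i _ => ?_
              rw [map_mul, map_pow, psi_X0]
            rw [← this, Finset.sum_mul]
            exact Finset.sum_congr rfl fun i _ => by rw [mul_assoc]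
        _ = psi R n p := hdsum

end ArtinAux


/-- **Artin basis theorem.**  `R = ℂ[x₁,…,xₙ]` is a free module over the
subring `R^{Sₙ}` of symmetric polynomials, with basis the monomials
`x₁^{a₁} ⋯ x_{n-1}^{a_{n-1}}` with `0 ≤ aᵢ ≤ n - i`; in particular the rank of `R`
over `R^{Sₙ}` is `n!`.  (Here the variable `x_{i+1}` corresponds to `i : Fin n`,
with exponent bound `n - 1 - i`.) -/
theorem artin_basis_of_symmetric_polynomials (n : ℕ) :
    (∃ b : Module.Basis {a : Fin n → ℕ // ∀ i : Fin n, a i ≤ n - 1 - (i : ℕ)}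
        (MvPolynomial.symmetricSubalgebra (Fin n) ℂ) (MvPolynomial (Fin n) ℂ),
      ∀ a, b a = ∏ i : Fin n, (MvPolynomial.X i : MvPolynomial (Fin n) ℂ) ^ a.1 i) ∧
    Nat.card {a : Fin n → ℕ // ∀ i : Fin n, a i ≤ n - 1 - (i : ℕ)} = n.factorial := by
  classical
  obtain ⟨hind, hspan⟩ := ArtinAux.main n ℂ
  set S := MvPolynomial.symmetricSubalgebra (Fin n) ℂ
  set v : ArtinAux.Idx n → MvPolynomial (Fin n) ℂ := fun a => ArtinAux.mono ℂ n a.1 with hv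
  have hsmul : ∀ (s : S) (m : MvPolynomial (Fin n) ℂ), s • m = (s : MvPolynomial (Fin n) ℂ) * m :=
    fun s m => rfl
  have hli : LinearIndependent S v := by
    rw [Fintype.linearIndependent_iff]
    intro g hg a
    have := hind (fun a => (g a : MvPolynomial (Fin n) ℂ)) (fun a => (g a).2) ?_ a
    · exact Subtype.ext this
    · rw [← hg]
      exact Finset.sum_congr rfl fun a _ => (hsmul (g a) (v a)).symm
  have hsp : ⊤ ≤ Submodule.span S (Set.range v) := by
    intro p _
    rw [Finsupp.mem_span_range_iff_exists_finsupp]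
    obtain ⟨c, hc, hcp⟩ := hspan p
    refine ⟨Finsupp.equivFunOnFinite.symm fun a => (⟨c a, hc a⟩ : S), ?_⟩
    rw [Finsupp.sum_fintype]
    · rw [← hcp]
      exact Finset.sum_congr rfl fun a _ => hsmul _ _
    · intro a; exact zero_smul _ _
  refine ⟨⟨Module.Basis.mk hli hsp, fun a => Module.Basis.mk_apply hli hsp a⟩, ?_⟩
  rw [Nat.card_eq_fintype_card, ArtinAux.idx_card]
end

section
/- Let B_s = R ⊗_{R^s} R where R = C[x_1, x_2] and R^s is the subring of symmetric polynomials. Then B_s ⊗_R B_s ≅ B_s ⊕ B_s as R,R-bimodules (ignoring grading shifts). Explicitly, R ⊗_{R^s} R ⊗_{R^s} R is isomorphic to (R ⊗_{R^s} R)^{⊕2} as an R,R-bimodule. -/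
open scoped TensorProduct

namespace Stmt11

set_option synthInstance.maxHeartbeats 1000000
set_option maxHeartbeats 1000000

noncomputable abbrev R2 := MvPolynomial (Fin 2) ℂ

/-- The subring of symmetric polynomials `Rˢ ⊆ ℂ[x₁,x₂]`. -/
noncomputable abbrev Rs : Subalgebra ℂ R2 := MvPolynomial.symmetricSubalgebra (Fin 2) ℂ

/-- The Bott–Samelson bimodule `B_s = R ⊗_{Rˢ} R`. -/
noncomputable abbrev Bs := R2 ⊗[Rs] R2

/-- `B_s ⊗_R B_s = R ⊗_{Rˢ} R ⊗_{Rˢ} R`. -/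
noncomputable abbrev BsBs := Bs ⊗[Rs] R2

/-- Left multiplication by `r ∈ R` on `B_s` (action on the leftmost factor). -/
noncomputable def lmul2 (r : R2) : Bs →ₗ[Rs] Bs :=
  LinearMap.rTensor R2 (LinearMap.mulLeft Rs r)

/-- Right multiplication by `r ∈ R` on `B_s` (action on the rightmost factor). -/
noncomputable def rmul2 (r : R2) : Bs →ₗ[Rs] Bs :=
  LinearMap.lTensor R2 (LinearMap.mulLeft Rs r)

/-- Left multiplication by `r ∈ R` on `B_s ⊗_R B_s`. -/
noncomputable def lmul3 (r : R2) : BsBs →ₗ[Rs] BsBs :=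
  LinearMap.rTensor R2 (lmul2 r)

/-- Right multiplication by `r ∈ R` on `B_s ⊗_R B_s`. -/
noncomputable def rmul3 (r : R2) : BsBs →ₗ[Rs] BsBs :=
  LinearMap.lTensor Bs (LinearMap.mulLeft Rs r)

/-! ### Auxiliary material: `R2` is free of rank 2 over `Rs`, basis `{1, x₀ - x₁}` -/

open MvPolynomial

/-- The variable-swapping algebra morphism. -/
noncomputable def sw : R2 →ₐ[ℂ] R2 := rename (Equiv.swap (0:Fin 2) 1)

/-- The antisymmetric element `δ = x₀ - x₁`. -/
noncomputable def δ : R2 := X 0 - X 1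

lemma perm_fin_two : ∀ σ : Equiv.Perm (Fin 2), σ = 1 ∨ σ = Equiv.swap 0 1 := by decide

lemma swap_comp : ⇑(Equiv.swap (0:Fin 2) 1) ∘ ⇑(Equiv.swap (0:Fin 2) 1) = id := by
  ext x; simp [Equiv.swap_apply_self]

lemma sw_sw (f : R2) : sw (sw f) = f := by
  simp [sw, rename_rename, swap_comp]

lemma sw_delta : sw δ = -δ := by
  simp [sw, δ, Equiv.swap_apply_left, Equiv.swap_apply_right]

lemma mem_Rs_iff (f : R2) : f ∈ Rs ↔ sw f = f := by
  rw [MvPolynomial.mem_symmetricSubalgebra]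
  constructor
  · intro h; exact h (Equiv.swap 0 1)
  · intro h σ
    rcases perm_fin_two σ with rfl | rfl
    · simp [MvPolynomial.rename_id]
    · exact h

lemma sw_coe (p : Rs) : sw (p : R2) = p := (mem_Rs_iff _).mp p.2

lemma delta_ne_zero : δ ≠ 0 := by
  simp only [δ, sub_ne_zero]
  exact fun h => (by decide : (0:Fin 2) ≠ 1) (MvPolynomial.X_injective h)

noncomputable abbrev A := MvPolynomial (Fin 1) ℂ
noncomputable def Φ : R2 ≃ₐ[ℂ] Polynomial A := MvPolynomial.finSuccEquiv ℂ 1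
noncomputable def ψ : R2 →ₐ[ℂ] A := aeval (fun _ => (X 0 : A))

lemma X1_eq : (X 1 : R2) = X (Fin.succ 0) := rfl

lemma Φ_delta : Φ δ = Polynomial.X - Polynomial.C (X 0) := by
  simp only [Φ, δ, map_sub, X1_eq, MvPolynomial.finSuccEquiv_X_zero,
    MvPolynomial.finSuccEquiv_X_succ]

lemma eval_Φ (f : R2) : Polynomial.eval (X 0 : A) (Φ f) = ψ f := by
  have h : ((Polynomial.aeval (X 0 : A)).restrictScalars ℂ).comp Φ.toAlgHom = ψ := by
    apply MvPolynomial.algHom_ext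
    intro i
    fin_cases i
    · simp only [AlgHom.comp_apply, AlgHom.coe_restrictScalars', AlgEquiv.toAlgHom_eq_coe,
        AlgHom.coe_coe, AlgEquiv.coe_toAlgHom, Φ, ψ, Fin.zero_eta, MvPolynomial.finSuccEquiv_X_zero,
        Polynomial.aeval_X, aeval_X]
    · simp only [AlgHom.comp_apply, AlgHom.coe_restrictScalars', AlgEquiv.toAlgHom_eq_coe,
        AlgHom.coe_coe, AlgEquiv.coe_toAlgHom, Φ, ψ, Fin.mk_one, X1_eq, MvPolynomial.finSuccEquiv_X_succ,
        Polynomial.aeval_C, aeval_X]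
      rfl
  have := congrArg (fun g => g f) h
  simpa [Polynomial.coe_aeval_eq_eval] using this

lemma psi_sw (f : R2) : ψ (sw f) = ψ f := by
  simp only [ψ, sw, aeval_rename]
  rfl

lemma delta_dvd (f : R2) : δ ∣ f - sw f := by
  have h : (Polynomial.X - Polynomial.C (X 0 : A)) ∣ Φ (f - sw f) := by
    rw [Polynomial.dvd_iff_isRoot]
    simp [Polynomial.IsRoot, map_sub, eval_Φ, psi_sw]
  rw [← Φ_delta] at h
  obtain ⟨c, hc⟩ := h
  exact ⟨Φ.symm c, by have := congrArg Φ.symm hc; simpa [map_mul] using this⟩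

lemma smul_Rs (r : Rs) (f : R2) : r • f = (r : R2) * f := rfl

/-- The `Rs`-linear map `Rs × Rs → R2`, `(p, q) ↦ p + q·δ`. -/
noncomputable def ℓ : Rs × Rs →ₗ[Rs] R2 where
  toFun pq := (pq.1 : R2) + (pq.2 : R2) * δ
  map_add' x y := by
    simp only [Prod.fst_add, Prod.snd_add, Subalgebra.coe_add]; ring
  map_smul' r x := by
    simp only [Prod.smul_fst, Prod.smul_snd, smul_eq_mul, RingHom.id_apply, smul_Rs,
      Subalgebra.coe_mul]; ring

lemma ℓ_inj : Function.Injective ℓ := by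
  rw [injective_iff_map_eq_zero]
  rintro ⟨p, q⟩ h
  simp only [ℓ, LinearMap.coe_mk, AddHom.coe_mk] at h
  have h2 : (p : R2) - (q : R2) * δ = 0 := by
    have := congrArg sw h
    simpa [map_add, map_mul, sw_coe, sw_delta, sub_eq_add_neg] using this
  have hp : (p : R2) = 0 := by
    have : (p : R2) + (p : R2) = 0 := by linear_combination h + h2
    exact add_self_eq_zero.mp this
  have hq : (q : R2) = 0 := by
    have hqd : (q : R2) * δ = 0 := by linear_combination h - hp
    rcases mul_eq_zero.mp hqd with h' | h'
    · exact h'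
    · exact absurd h' delta_ne_zero
  exact Prod.ext (Subtype.ext hp) (Subtype.ext hq)

lemma ℓ_surj : Function.Surjective ℓ := by
  intro f
  set p : R2 := (2:ℂ)⁻¹ • (f + sw f) with hp
  have hps : sw p = p := by
    simp only [hp, map_smul, map_add, sw_sw]; ring_nf
  obtain ⟨q0, hq0⟩ := delta_dvd f
  set q : R2 := (2:ℂ)⁻¹ • q0 with hq
  have hfq : f - sw f = δ * q0 := hq0
  have hdq : sw q0 * δ = q0 * δ := by
    have h1 : sw (f - sw f) = -(f - sw f) := by simp [map_sub, sw_sw]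
    have h2 : sw δ * sw q0 = -(δ * q0) := by
      rw [← map_mul, ← hfq, h1, hfq]
    rw [sw_delta] at h2
    linear_combination -h2
  have hqs : sw q = q := by
    have : sw q0 = q0 := mul_right_cancel₀ delta_ne_zero hdq
    simp [hq, map_smul, this]
  refine ⟨(⟨p, (mem_Rs_iff p).mpr hps⟩, ⟨q, (mem_Rs_iff q).mpr hqs⟩), ?_⟩
  simp only [ℓ, LinearMap.coe_mk, AddHom.coe_mk]
  calc (p : R2) + q * δ = (2:ℂ)⁻¹ • ((f + sw f) + (f - sw f)) := by
        rw [hp, hq, smul_mul_assoc, ← smul_add, mul_comm q0 δ, ← hfq]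
    _ = (2:ℂ)⁻¹ • ((2:ℂ) • f) := by rw [two_smul]; ring_nf
    _ = f := inv_smul_smul₀ two_ne_zero f

/-- `R2 ≅ Rs ⊕ Rs` as an `Rs`-module. -/
noncomputable def eRs : (Rs × Rs) ≃ₗ[Rs] R2 :=
  LinearEquiv.ofBijective ℓ ⟨ℓ_inj, ℓ_surj⟩

/-- The desired equivalence `BsBs ≃ Bs × Bs`. -/
noncomputable def φ0 : BsBs ≃ₗ[Rs] Bs × Bs :=
  (TensorProduct.congr (TensorProduct.congr (LinearEquiv.refl Rs R2) eRs.symm)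
      (LinearEquiv.refl Rs R2)) ≪≫ₗ
  (TensorProduct.congr (TensorProduct.prodRight Rs Rs R2 Rs Rs) (LinearEquiv.refl Rs R2)) ≪≫ₗ
  (TensorProduct.congr ((TensorProduct.rid Rs R2).prodCongr (TensorProduct.rid Rs R2))
      (LinearEquiv.refl Rs R2)) ≪≫ₗ
  (TensorProduct.prodLeft Rs Rs R2 R2 R2)

lemma lmul2_tmul (r x y : R2) : lmul2 r (x ⊗ₜ[Rs] y) = (r * x) ⊗ₜ[Rs] y := rfl
lemma rmul2_tmul (r x y : R2) : rmul2 r (x ⊗ₜ[Rs] y) = x ⊗ₜ[Rs] (r * y) := rfl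
lemma lmul3_tmul (r x y z : R2) :
    lmul3 r ((x ⊗ₜ[Rs] y) ⊗ₜ[Rs] z) = ((r * x) ⊗ₜ[Rs] y) ⊗ₜ[Rs] z := rfl
lemma rmul3_tmul (r x y z : R2) :
    rmul3 r ((x ⊗ₜ[Rs] y) ⊗ₜ[Rs] z) = (x ⊗ₜ[Rs] y) ⊗ₜ[Rs] (r * z) := rfl

lemma φ0_tmul (a m b : R2) :
    φ0 ((a ⊗ₜ[Rs] m) ⊗ₜ[Rs] b) =
      (((eRs.symm m).1 • a) ⊗ₜ[Rs] b, ((eRs.symm m).2 • a) ⊗ₜ[Rs] b) := by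
  rfl

/-- `B_s ⊗_R B_s ≅ B_s ⊕ B_s` as `R,R`-bimodules (ignoring grading
shifts): there is an `Rˢ`-linear equivalence
`R ⊗_{Rˢ} R ⊗_{Rˢ} R ≃ (R ⊗_{Rˢ} R)⊕² ` commuting with both the left and the right
multiplication by elements of `R`. -/
theorem BsBs_iso_Bs_oplus_Bs :
    ∃ φ : BsBs ≃ₗ[Rs] Bs × Bs,
      (∀ (r : R2) (t : BsBs),
        φ (lmul3 r t) = (lmul2 r (φ t).1, lmul2 r (φ t).2)) ∧
      (∀ (r : R2) (t : BsBs),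
        φ (rmul3 r t) = (rmul2 r (φ t).1, rmul2 r (φ t).2)) := by
  refine ⟨φ0, ?_, ?_⟩
  · intro r t
    induction t using TensorProduct.induction_on with
    | zero => simp; rfl
    | add x y hx hy => simp [map_add, hx, hy, Prod.fst_add, Prod.snd_add]
    | tmul u b =>
      induction u using TensorProduct.induction_on with
      | zero => simp [lmul3, lmul2]; rfl
      | add x y hx hy =>
        simp only [TensorProduct.add_tmul, map_add, Prod.fst_add, Prod.snd_add] at *
        simp [hx, hy]
      | tmul a m =>
        simp [lmul3_tmul, lmul2_tmul, LinearMap.rTensor_tmul, LinearMap.lTensor_tmul,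
          LinearMap.mulLeft_apply, φ0_tmul, mul_smul_comm]
  · intro r t
    induction t using TensorProduct.induction_on with
    | zero => simp; rfl
    | add x y hx hy => simp [map_add, hx, hy, Prod.fst_add, Prod.snd_add]
    | tmul u b =>
      induction u using TensorProduct.induction_on with
      | zero => simp [rmul3, rmul2]; rfl
      | add x y hx hy =>
        simp only [TensorProduct.add_tmul, map_add, Prod.fst_add, Prod.snd_add] at *
        simp [hx, hy]
      | tmul a m =>
        simp [rmul3_tmul, rmul2_tmul, LinearMap.rTensor_tmul, LinearMap.lTensor_tmul,
          LinearMap.mulLeft_apply, φ0_tmul, mul_smul_comm]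

end Stmt11
end
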